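/- For fixed x > 1, the function y ↦ g(x,y) = f(x+1,y) − f(x,y) is strictly decreasing on (0,∞), where f(x,y) = [log Γ(x+y+1) − log Γ(y+1)]/x − (1/2)log(x+y). -/

import Mathlib

noncomputable def f (x y : ℝ) : ℝ :=
  (Real.log (Real.Gamma (x + y + 1)) - Real.log (Real.Gamma (y + 1))) / x -
    (1 / 2) * Real.log (x + y)

noncomputable def g (x y : ℝ) : ℝ := f (x + 1) y - f x y

/-- The per-index summand in the Gauss-limit representation of `g x`. -/
noncomputable def S (x : ℝ) (m : ℕ) (y : ℝ) : ℝ :=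
  (1/x) * (Real.log (x+y+1+m) - Real.log (y+1+m))
  - (1/(x+1)) * (Real.log (x+y+2+m) - Real.log (y+1+m))
  - (1/2) * (2*Real.log (x+y+1+m) - Real.log (x+y+m) - Real.log (x+y+2+m))

theorem S_hasDeriv (x : ℝ) (hx : 1 < x) (m : ℕ) (y : ℝ) (hy : 0 < y) :
    HasDerivAt (S x m)
      ((1-x)/((y+1+m)*((x+y+1+m)*((x+y+2+m)*(x+y+m))))) y := by
  have hm : (0:ℝ) ≤ m := Nat.cast_nonneg m
  have hA : 0 < y+1+(m:ℝ) := by linarith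
  have hB : 0 < x+y+1+(m:ℝ) := by linarith
  have hC : 0 < x+y+2+(m:ℝ) := by linarith
  have hD : 0 < x+y+(m:ℝ) := by linarith
  have dA : HasDerivAt (fun t : ℝ => t+1+(m:ℝ)) 1 y := by
    simpa using ((hasDerivAt_id y).add_const (1:ℝ)).add_const (m:ℝ)
  have dB : HasDerivAt (fun t : ℝ => x+t+1+(m:ℝ)) 1 y := by
    simpa using (((hasDerivAt_id y).const_add x).add_const (1:ℝ)).add_const (m:ℝ)
  have dC : HasDerivAt (fun t : ℝ => x+t+2+(m:ℝ)) 1 y := by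
    simpa using (((hasDerivAt_id y).const_add x).add_const (2:ℝ)).add_const (m:ℝ)
  have dD : HasDerivAt (fun t : ℝ => x+t+(m:ℝ)) 1 y := by
    simpa using ((hasDerivAt_id y).const_add x).add_const (m:ℝ)
  have lA : HasDerivAt (fun t : ℝ => Real.log (t+1+(m:ℝ))) (1/(y+1+(m:ℝ))) y := by
    simpa using dA.log hA.ne'
  have lB : HasDerivAt (fun t : ℝ => Real.log (x+t+1+(m:ℝ))) (1/(x+y+1+(m:ℝ))) y := by
    simpa using dB.log hB.ne'
  have lC : HasDerivAt (fun t : ℝ => Real.log (x+t+2+(m:ℝ))) (1/(x+y+2+(m:ℝ))) y := by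
    simpa using dC.log hC.ne'
  have lD : HasDerivAt (fun t : ℝ => Real.log (x+t+(m:ℝ))) (1/(x+y+(m:ℝ))) y := by
    simpa using dD.log hD.ne'
  have H := (((lB.sub lA).const_mul (1/x)).sub ((lC.sub lA).const_mul (1/(x+1)))).sub
    ((((lB.const_mul 2).sub lD).sub lC).const_mul (1/2))
  have hx0 : x ≠ 0 := by linarith
  have hx1 : x + 1 ≠ 0 := by linarith
  convert H using 1
  all_goals first | rfl | (field_simp; ring)

theorem S_strictAnti (x : ℝ) (hx : 1 < x) (m : ℕ) : StrictAntiOn (S x m) (Set.Ioi 0) := by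
  have key : ∀ y ∈ Set.Ioi (0:ℝ), HasDerivAt (S x m)
      ((1-x)/((y+1+m)*((x+y+1+m)*((x+y+2+m)*(x+y+m))))) y :=
    fun y hy => S_hasDeriv x hx m y hy
  apply strictAntiOn_of_deriv_neg (convex_Ioi 0)
  · exact fun y hy => (key y hy).differentiableAt.continuousAt.continuousWithinAt
  · rw [interior_Ioi]
    intro y hy
    rw [(key y hy).deriv]
    have hm : (0:ℝ) ≤ m := Nat.cast_nonneg m
    have hy' : (0:ℝ) < y := hy
    apply div_neg_of_neg_of_pos
    · linarith
    · have hA : 0 < y+1+(m:ℝ) := by linarith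
      have hB : 0 < x+y+1+(m:ℝ) := by linarith
      have hC : 0 < x+y+2+(m:ℝ) := by linarith
      have hD : 0 < x+y+(m:ℝ) := by linarith
      exact mul_pos hA (mul_pos hB (mul_pos hC hD))

theorem sum_S_eq (x : ℝ) (hx : 1 < x) (y : ℝ) (n : ℕ) :
    ∑ m ∈ Finset.range (n+1), S x m y =
      (1/(x+1)) * (Real.BohrMollerup.logGammaSeq (x+y+2) n
          - Real.BohrMollerup.logGammaSeq (y+1) n)
      - (1/x) * (Real.BohrMollerup.logGammaSeq (x+y+1) n
          - Real.BohrMollerup.logGammaSeq (y+1) n)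
      - (1/2) * ∑ m ∈ Finset.range (n+1),
          (2*Real.log (x+y+1+m) - Real.log (x+y+m) - Real.log (x+y+2+m)) := by
  have hx0 : x ≠ 0 := by linarith
  have hx1 : x + 1 ≠ 0 := by linarith
  simp only [S, Real.BohrMollerup.logGammaSeq, Finset.sum_sub_distrib, ← Finset.mul_sum]
  field_simp
  ring

theorem tel_sum (x y : ℝ) (n : ℕ) :
    ∑ m ∈ Finset.range (n+1),
        (2*Real.log (x+y+1+m) - Real.log (x+y+m) - Real.log (x+y+2+m)) =
      (Real.log (x+y+1) - Real.log (x+y))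
        - (Real.log (x+y+1+((n:ℝ)+1)) - Real.log (x+y+((n:ℝ)+1))) := by
  have h := Finset.sum_range_sub'
    (fun m : ℕ => Real.log (x+y+1+(m:ℝ)) - Real.log (x+y+(m:ℝ))) (n+1)
  simp only [Nat.cast_zero, add_zero, Nat.cast_add, Nat.cast_one] at h
  rw [← h]
  apply Finset.sum_congr rfl
  intro m _
  ring_nf

theorem log_succ_sub_log : Filter.Tendsto (fun t : ℝ => Real.log (t+1) - Real.log t)
    Filter.atTop (nhds 0) := by
  have l1 : Filter.Tendsto (fun t : ℝ => 1 + t⁻¹) Filter.atTop (nhds 1) := by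
    simpa using (tendsto_const_nhds (x := (1:ℝ)) (f := Filter.atTop)).add tendsto_inv_atTop_zero
  have l2 : Filter.Tendsto (fun t : ℝ => Real.log (1 + t⁻¹)) Filter.atTop (nhds 0) := by
    have := (Real.continuousAt_log (x := 1) one_ne_zero).tendsto.comp l1
    simpa [Function.comp_def] using this
  apply l2.congr'
  filter_upwards [Filter.eventually_gt_atTop (0:ℝ)] with t ht
  rw [show 1 + t⁻¹ = (t+1)/t by field_simp, Real.log_div (by linarith) ht.ne']

theorem g_tendsto (x : ℝ) (hx : 1 < x) (y : ℝ) (hy : 0 < y) :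
    Filter.Tendsto (fun n => ∑ m ∈ Finset.range (n+1), S x m y)
      Filter.atTop (nhds (g x y)) := by
  have h1 := Real.BohrMollerup.tendsto_log_gamma (x := x+y+2) (by linarith)
  have h2 := Real.BohrMollerup.tendsto_log_gamma (x := x+y+1) (by linarith)
  have h3 := Real.BohrMollerup.tendsto_log_gamma (x := y+1) (by linarith)
  have hshift : Filter.Tendsto (fun n : ℕ => x+y+((n:ℝ)+1)) Filter.atTop Filter.atTop := by
    apply Filter.tendsto_atTop_add_const_left
    exact Filter.tendsto_atTop_add_const_right _ _ tendsto_natCast_atTop_atTop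
  have h4 : Filter.Tendsto
      (fun n : ℕ => Real.log (x+y+1+((n:ℝ)+1)) - Real.log (x+y+((n:ℝ)+1)))
      Filter.atTop (nhds 0) := by
    have := log_succ_sub_log.comp hshift
    apply this.congr
    intro n
    simp only [Function.comp_apply]
    ring_nf
  have hfun : (fun n => ∑ m ∈ Finset.range (n+1), S x m y) = fun n =>
      ((1/(x+1)) * (Real.BohrMollerup.logGammaSeq (x+y+2) n
          - Real.BohrMollerup.logGammaSeq (y+1) n)
        - (1/x) * (Real.BohrMollerup.logGammaSeq (x+y+1) n
          - Real.BohrMollerup.logGammaSeq (y+1) n)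
        - (1/2) * (Real.log (x+y+1) - Real.log (x+y)))
      + (1/2) * (Real.log (x+y+1+((n:ℝ)+1)) - Real.log (x+y+((n:ℝ)+1))) := by
    funext n
    rw [sum_S_eq x hx y n, tel_sum x y n]
    ring
  rw [hfun]
  have hg : g x y =
      ((1/(x+1)) * (Real.log (Real.Gamma (x+y+2)) - Real.log (Real.Gamma (y+1)))
        - (1/x) * (Real.log (Real.Gamma (x+y+1)) - Real.log (Real.Gamma (y+1)))
        - (1/2) * (Real.log (x+y+1) - Real.log (x+y))) + (1/2) * 0 := by
    have hx0 : x ≠ 0 := by linarith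
    have hx1 : x + 1 ≠ 0 := by linarith
    simp only [g, f]
    rw [show x+1+y+1 = x+y+2 by ring, show x+1+y = x+y+1 by ring]
    field_simp
    ring
  rw [hg]
  exact (((((h1.sub h3).const_mul _).sub ((h2.sub h3).const_mul _)).sub
    tendsto_const_nhds)).add (h4.const_mul _)

theorem stmt_17 (x : ℝ) (hx : 1 < x) :
    StrictAntiOn (fun y => g x y) (Set.Ioi 0) := by
  intro a ha b hb hab
  have ha' : (0:ℝ) < a := ha
  have hb' : (0:ℝ) < b := hb
  have hstep : ∀ n : ℕ, ∑ m ∈ Finset.range (n+1), S x m b ≤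
      (∑ m ∈ Finset.range (n+1), S x m a) + (S x 0 b - S x 0 a) := by
    intro n
    rw [Finset.sum_range_succ' (fun m => S x m b) n,
        Finset.sum_range_succ' (fun m => S x m a) n]
    have hsum : ∑ m ∈ Finset.range n, S x (m+1) b ≤ ∑ m ∈ Finset.range n, S x (m+1) a :=
      Finset.sum_le_sum fun m _ => (S_strictAnti x hx (m+1) ha hb hab).le
    linarith
  have hlim := g_tendsto x hx b hb'
  have hlim' := (g_tendsto x hx a ha').add_const (S x 0 b - S x 0 a)
  have hineq : g x b ≤ g x a + (S x 0 b - S x 0 a) :=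
    le_of_tendsto_of_tendsto' hlim hlim' hstep
  have hS0 : S x 0 b < S x 0 a := S_strictAnti x hx 0 ha hb hab
  simpa using lt_of_le_of_lt hineq (by linarith)
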